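/- arXiv:2605.18726 — 2 statements merged into one kernel-verified Lean document; each statement's English description precedes it below -/
import Mathlib

section
/- For any n-type t on a finite alphabet 𝒳 and k ≤ n, the probability that the first k symbols of a uniformly random string from the type class T_{n,t} have type s (an k-type) is at most (1 - k/n)^{-k} times the probability that k i.i.d. samples from t have type s. Equivalently, binom(n,k)^{-1} ∏_x binom(n·t(x), k·s(x)) ≤ (1-k/n)^{-k} · binom(k, k·s) · ∏_x t(x)^{k·s(x)}. -/
/-- hypergeometric vs i.i.d. type probabilities.
For an `n`-type `t` (given by counts `t x` with `∑ x, t x = n`) and a `k`-type `s`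
(counts with `∑ x, s x = k`), `k < n`, the hypergeometric probability of type `s`
is at most `(1 - k/n)^{-k}` times the i.i.d. probability
`binom(k, k·s) ∏_x (t x / n)^{s x}`. -/
theorem stmt_0 {𝒳 : Type*} [Fintype 𝒳] (n k : ℕ) (hk : k < n)
    (t s : 𝒳 → ℕ) (ht : ∑ x, t x = n) (hs : ∑ x, s x = k) :
    ((n.choose k : ℝ))⁻¹ * ∏ x, ((t x).choose (s x) : ℝ)
      ≤ (1 - (k : ℝ) / n) ^ (-(k : ℤ)) *
        ((Nat.multinomial Finset.univ s : ℝ) * ∏ x, ((t x : ℝ) / n) ^ (s x)) := by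
  have hkn : k ≤ n := hk.le
  have hn0 : (0:ℝ) < n := by exact_mod_cast Nat.lt_of_le_of_lt (Nat.zero_le k) hk
  have hnk : (0:ℝ) < (n:ℝ) - k := by
    have : (k:ℝ) < n := by exact_mod_cast hk
    linarith
  have hB : (0:ℝ) < n.choose k := by exact_mod_cast Nat.choose_pos hkn
  -- rewrite 1 - k/n as (n-k)/n
  have h1 : (1 - (k : ℝ) / n) = ((n:ℝ) - k)/n := by field_simp
  rw [h1, zpow_neg, zpow_natCast, div_pow, inv_div]
  -- rewrite product of (t/n)^s
  have h2 : ∏ x, ((t x : ℝ) / n) ^ (s x) = (∏ x, ((t x : ℝ)) ^ (s x)) / (n:ℝ)^k := by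
    rw [← hs]
    simp_rw [div_pow]
    rw [Finset.prod_div_distrib, Finset.prod_pow_eq_pow_sum]
  rw [h2]
  -- key natural number inequality
  have key : (∏ x, (t x).choose (s x) * Nat.factorial (s x)) * (n - k)^k
      ≤ (∏ x, (t x)^(s x)) * (n.choose k * Nat.factorial k) := by
    apply Nat.mul_le_mul
    · apply Finset.prod_le_prod (fun _ _ => Nat.zero_le _)
      intro x _
      rw [Nat.mul_comm, ← Nat.descFactorial_eq_factorial_mul_choose]
      exact Nat.descFactorial_le_pow _ _
    · calc (n - k)^k ≤ (n + 1 - k)^k := Nat.pow_le_pow_left (by omega) k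
        _ ≤ n.descFactorial k := Nat.pow_sub_le_descFactorial n k
        _ = Nat.factorial k * n.choose k := Nat.descFactorial_eq_factorial_mul_choose n k
        _ = n.choose k * Nat.factorial k := Nat.mul_comm _ _
  -- cast key to ℝ
  have keyR : (∏ x, ((t x).choose (s x) : ℝ)) * (∏ x, (Nat.factorial (s x) : ℝ)) * ((n:ℝ) - k)^k
      ≤ (∏ x, ((t x):ℝ)^(s x)) * ((n.choose k : ℝ) * (Nat.factorial k : ℝ)) := by
    have := key
    have hcast : ((n - k : ℕ) : ℝ) = (n:ℝ) - k := by
      push_cast [Nat.cast_sub hkn]; ring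
    calc (∏ x, ((t x).choose (s x) : ℝ)) * (∏ x, (Nat.factorial (s x) : ℝ)) * ((n:ℝ) - k)^k
        = ((∏ x, (t x).choose (s x) * Nat.factorial (s x)) * (n - k)^k : ℕ) := by
          push_cast [hcast, Finset.prod_mul_distrib]; ring
      _ ≤ ((∏ x, (t x)^(s x)) * (n.choose k * Nat.factorial k) : ℕ) := by exact_mod_cast key
      _ = (∏ x, ((t x):ℝ)^(s x)) * ((n.choose k : ℝ) * (Nat.factorial k : ℝ)) := by push_cast; ring
  -- multinomial spec
  have hms : (∏ x, (Nat.factorial (s x) : ℝ)) * (Nat.multinomial Finset.univ s : ℝ) = (Nat.factorial k : ℝ) := by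
    rw_mod_cast [Nat.multinomial_spec, hs]
  have hsf : (0:ℝ) < ∏ x, (Nat.factorial (s x) : ℝ) := by
    apply Finset.prod_pos; intro x _; exact_mod_cast Nat.factorial_pos _
  rw [inv_mul_le_iff₀ hB]
  have hr : (n.choose k : ℝ) * ((n:ℝ)^k / ((n:ℝ) - k)^k * ((Nat.multinomial Finset.univ s : ℝ) *
      ((∏ x, ((t x):ℝ)^(s x)) / (n:ℝ)^k)))
      = (n.choose k : ℝ) * (Nat.multinomial Finset.univ s : ℝ) * (∏ x, ((t x):ℝ)^(s x))
        / ((n:ℝ) - k)^k := by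
    field_simp
  rw [mul_comm ((n:ℝ)^k / ((n:ℝ) - k)^k), ← mul_assoc, mul_assoc _ _ ((n:ℝ)^k / ((n:ℝ) - k)^k)]
  rw [show (n.choose k : ℝ) * ((Nat.multinomial Finset.univ s : ℝ) *
      ((∏ x, ((t x):ℝ)^(s x)) / (n:ℝ)^k) * ((n:ℝ)^k / ((n:ℝ) - k)^k))
      = (n.choose k : ℝ) * (Nat.multinomial Finset.univ s : ℝ) * (∏ x, ((t x):ℝ)^(s x))
        / ((n:ℝ) - k)^k from by field_simp]
  rw [le_div_iff₀ (pow_pos hnk k)]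
  rw [← mul_le_mul_iff_right₀ hsf]
  calc (∏ x, (Nat.factorial (s x) : ℝ)) * ((∏ x, ((t x).choose (s x) : ℝ)) * ((n:ℝ) - k)^k)
      = ((∏ x, ((t x).choose (s x) : ℝ)) * (∏ x, (Nat.factorial (s x) : ℝ))) * ((n:ℝ) - k)^k := by
        ring
    _ ≤ (∏ x, ((t x):ℝ)^(s x)) * ((n.choose k : ℝ) * (Nat.factorial k : ℝ)) := keyR
    _ = (∏ x, (Nat.factorial (s x) : ℝ)) *
        ((n.choose k : ℝ) * (Nat.multinomial Finset.univ s : ℝ) * (∏ x, ((t x):ℝ)^(s x))) := by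
        rw [← hms]; ring
end

section
/- Let t be an n-type and k ≤ n. The max-relative entropy of the k-marginal of the uniform distribution on the type class T_{n,t} with respect to t^{⊗k} is at most -k·log(1 - k/n); that is, D_max((u_t)_{[k]} ‖ t^{⊗k}) ≤ -k log(1 - k/n). -/
open scoped Classical

/-- The empirical type of a string `f : Fin m → 𝒳`. -/
noncomputable def typeOf {𝒳 : Type*} [Fintype 𝒳] {m : ℕ} (f : Fin m → 𝒳) : 𝒳 → ℕ :=
  fun x => (Finset.univ.filter fun i => f i = x).card

lemma typeOf_comp_perm {𝒳 : Type*} [Fintype 𝒳] {n : ℕ} (f : Fin n → 𝒳)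
    (π : Equiv.Perm (Fin n)) : typeOf (f ∘ ⇑π) = typeOf f := by
  funext x
  unfold typeOf
  refine Finset.card_bij' (fun i _ => π i) (fun j _ => π.symm j) ?_ ?_ ?_ ?_ <;>
    simp [Function.comp]

lemma exists_perm_comp {α β : Type*} [Fintype α] [Fintype β] (e₁ e₂ : α ↪ β) :
    ∃ π : Equiv.Perm β, ∀ a, π (e₁ a) = e₂ a := by
  classical
  have hc : Fintype.card (↥(Set.range ⇑e₁)ᶜ) = Fintype.card (↥(Set.range ⇑e₂)ᶜ) := by
    rw [Fintype.card_compl_set, Fintype.card_compl_set,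
      Set.card_range_of_injective e₁.injective, Set.card_range_of_injective e₂.injective]
  refine ⟨(Equiv.Set.sumCompl (Set.range ⇑e₁)).symm.trans
    ((Equiv.sumCongr ((Equiv.ofInjective _ e₁.injective).symm.trans
      (Equiv.ofInjective _ e₂.injective)) (Fintype.equivOfCardEq hc)).trans
    (Equiv.Set.sumCompl (Set.range ⇑e₂))), fun a => ?_⟩
  have h1 : (Equiv.Set.sumCompl (Set.range ⇑e₁)).symm (e₁ a)
      = Sum.inl ⟨e₁ a, Set.mem_range_self a⟩ :=
    Equiv.Set.sumCompl_symm_apply_of_mem (Set.mem_range_self a)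
  simp only [Equiv.trans_apply]
  rw [h1]
  simp [Equiv.ofInjective_symm_apply]

lemma card_prefix_mul_le {𝒳 : Type*} [Fintype 𝒳] {n k : ℕ} (hk : k ≤ n)
    (t : 𝒳 → ℕ) (y : Fin k → 𝒳) :
    (Finset.univ.filter fun f : Fin n → 𝒳 =>
        typeOf f = t ∧ ∀ i : Fin k, f (Fin.castLE hk i) = y i).card * n.descFactorial k
    ≤ (Finset.univ.filter fun f : Fin n → 𝒳 => typeOf f = t).card * ∏ i : Fin k, t (y i) := by
  classical
  set T := Finset.univ.filter fun f : Fin n → 𝒳 => typeOf f = t with hT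
  set Ty := Finset.univ.filter fun f : Fin n → 𝒳 =>
      typeOf f = t ∧ ∀ i : Fin k, f (Fin.castLE hk i) = y i with hTy
  set P : Finset ((Fin n → 𝒳) × (Fin k → Fin n)) :=
    Finset.univ.filter fun p => typeOf p.1 = t ∧ ∀ i, p.1 (p.2 i) = y i with hP
  have hPcard : P.card = T.card * ∏ i : Fin k, t (y i) := by
    have hE : P = T.biUnion fun h => {h} ×ˢ
        Fintype.piFinset fun i => Finset.univ.filter fun j => h j = y i := by
      ext ⟨h, g⟩
      simp only [hP, hT, Finset.mem_filter, Finset.mem_univ, true_and, Finset.mem_biUnion,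
        Finset.mem_product, Finset.mem_singleton, Fintype.mem_piFinset]
      constructor
      · rintro ⟨h1, h2⟩; exact ⟨h, h1, rfl, h2⟩
      · rintro ⟨h', h1, rfl, h2⟩; exact ⟨h1, h2⟩
    rw [hE, Finset.card_biUnion]
    · rw [Finset.sum_congr rfl (fun h hh => ?_), Finset.sum_const, smul_eq_mul]
      rw [Finset.card_product, Finset.card_singleton, one_mul, Fintype.card_piFinset]
      refine Finset.prod_congr rfl fun i _ => ?_
      have := (Finset.mem_filter.mp hh).2
      rw [← this]; rfl
    · intro a _ b _ hab
      refine Finset.disjoint_left.mpr ?_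
      rintro ⟨h, g⟩ h1 h2
      rw [Finset.mem_product, Finset.mem_singleton] at h1 h2
      exact hab (h1.1 ▸ h2.1)
  have key : Ty.card * n.descFactorial k ≤ P.card := by
    have hcard : Fintype.card (Fin k ↪ Fin n) = n.descFactorial k := by
      simp [Fintype.card_embedding_eq]
    choose π hπ using fun σ : Fin k ↪ Fin n => exists_perm_comp (Fin.castLEEmb hk) σ
    calc Ty.card * n.descFactorial k = (Ty ×ˢ (Finset.univ : Finset (Fin k ↪ Fin n))).card := by
          rw [Finset.card_product, Finset.card_univ, hcard]
      _ ≤ P.card := by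
          refine Finset.card_le_card_of_injOn
            (fun q => (q.1 ∘ ⇑(π q.2).symm, ⇑q.2)) ?_ ?_
          · rintro ⟨f, σ⟩ hq
            rw [Finset.mem_coe, Finset.mem_product, hTy, Finset.mem_filter] at hq
            rw [hP, Finset.mem_coe, Finset.mem_filter]
            refine ⟨Finset.mem_univ _, by rw [typeOf_comp_perm]; exact hq.1.2.1, fun i => ?_⟩
            have h2 : (π σ).symm (σ i) = Fin.castLE hk i := by
              rw [← hπ σ i]; simp
            simp only [Function.comp_apply, h2]
            exact hq.1.2.2 i
          · rintro ⟨f, σ⟩ hq ⟨f', σ'⟩ hq' heq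
            have h2 : σ = σ' := DFunLike.coe_injective (congrArg Prod.snd heq)
            subst h2
            have h1 : f ∘ ⇑(π σ).symm = f' ∘ ⇑(π σ).symm := congrArg Prod.fst heq
            have hf : f = f' := by
              funext j
              simpa using congrFun h1 ((π σ) j)
            rw [hf]
  calc Ty.card * n.descFactorial k ≤ P.card := key
    _ = _ := hPcard

/-- `D_max((u_t)_{[k]} ‖ t^{⊗k}) ≤ -k log(1 - k/n)`, where `u_t` is the
uniform distribution on the type class of the `n`-type `t` and `(u_t)_{[k]}` is its
marginal on the first `k` coordinates. `D_max(p‖q) = log max_{y ∈ supp p} p(y)/q(y)`. -/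
theorem stmt_1 {𝒳 : Type*} [Fintype 𝒳] [Nonempty 𝒳] (n k : ℕ) (hk : k < n)
    (t : 𝒳 → ℕ) (ht : ∑ x, t x = n) (hT : ∃ f : Fin n → 𝒳, typeOf f = t) :
    Real.log (Finset.univ.sup' Finset.univ_nonempty (fun y : Fin k → 𝒳 =>
      let T : Finset (Fin n → 𝒳) := Finset.univ.filter fun f => typeOf f = t
      let marg : ℝ :=
        ((T.filter fun f => ∀ i : Fin k, f (Fin.castLE hk.le i) = y i).card : ℝ) / (T.card : ℝ)
      let prodt : ℝ := ∏ i : Fin k, (t (y i) : ℝ) / n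
      if 0 < marg then marg / prodt else 0))
      ≤ -(k : ℝ) * Real.log (1 - (k : ℝ) / n) := by
  classical
  have hn : (0:ℝ) < n := by exact_mod_cast Nat.zero_lt_of_lt hk
  have hnk : (0:ℝ) < (n:ℝ) - (k:ℝ) := by
    have : (k:ℝ) < n := by exact_mod_cast hk
    linarith
  set c : ℝ := ((n : ℝ) / ((n : ℝ) - k)) ^ k with hc
  have hc1 : 1 ≤ c := one_le_pow₀ ((one_le_div hnk).mpr (by linarith))
  set F := (fun y : Fin k → 𝒳 =>
      let T : Finset (Fin n → 𝒳) := Finset.univ.filter fun f => typeOf f = t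
      let marg : ℝ :=
        ((T.filter fun f => ∀ i : Fin k, f (Fin.castLE hk.le i) = y i).card : ℝ) / (T.card : ℝ)
      let prodt : ℝ := ∏ i : Fin k, (t (y i) : ℝ) / n
      if 0 < marg then marg / prodt else 0) with hF
  have hF0 : ∀ y, 0 ≤ F y := by
    intro y
    simp only [hF]
    split_ifs with h
    · exact div_nonneg h.le (Finset.prod_nonneg fun i _ => by positivity)
    · exact le_refl 0
  have hsup : Finset.univ.sup' Finset.univ_nonempty F ≤ c := by
    apply Finset.sup'_le
    intro y _
    simp only [hF]
    split_ifs with hpos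
    · set T := Finset.univ.filter fun f : Fin n → 𝒳 => typeOf f = t with hTdef
      set Tyc := (T.filter fun f => ∀ i : Fin k, f (Fin.castLE hk.le i) = y i).card with hTyc
      have hTpos : (0:ℝ) < T.card := by
        by_contra hle
        push_neg at hle
        have : (T.card : ℝ) = 0 := le_antisymm hle (by positivity)
        rw [this, div_zero] at hpos
        exact lt_irrefl 0 hpos
      have hTypos : (0:ℝ) < Tyc := by
        by_contra hle
        push_neg at hle
        have : (Tyc : ℝ) = 0 := le_antisymm hle (by positivity)
        rw [this, zero_div] at hpos
        exact lt_irrefl 0 hpos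
      have hTymem : ∃ f, f ∈ T.filter fun f => ∀ i : Fin k, f (Fin.castLE hk.le i) = y i := by
        apply Finset.card_pos.mp
        exact_mod_cast hTypos
      obtain ⟨f, hf⟩ := hTymem
      rw [Finset.mem_filter, hTdef, Finset.mem_filter] at hf
      have hty : ∀ i : Fin k, 1 ≤ t (y i) := by
        intro i
        rw [← hf.1.2]
        unfold typeOf
        refine Finset.card_pos.mpr ⟨Fin.castLE hk.le i, ?_⟩
        rw [Finset.mem_filter]
        exact ⟨Finset.mem_univ _, hf.2 i⟩
      have htyR : ∀ i : Fin k, (1:ℝ) ≤ (t (y i) : ℝ) := fun i => by exact_mod_cast hty i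
      have hprodpos : (0:ℝ) < ∏ i : Fin k, (t (y i) : ℝ) :=
        Finset.prod_pos fun i _ => lt_of_lt_of_le one_pos (htyR i)
      have hnat := card_prefix_mul_le hk.le t y
      rw [Finset.filter_filter] at hTyc
      rw [← hTyc, ← hTdef] at hnat
      have hkey : (Tyc : ℝ) * ((n:ℝ) - k) ^ k ≤ (T.card : ℝ) * ∏ i : Fin k, (t (y i) : ℝ) := by
        have h1 : Tyc * (n - k) ^ k ≤ T.card * ∏ i : Fin k, t (y i) :=
          le_trans (Nat.mul_le_mul_left _ (le_trans
            (Nat.pow_le_pow_left (Nat.sub_le_sub_right (Nat.le_succ n) k) k)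
            (Nat.pow_sub_le_descFactorial n k))) hnat
        calc (Tyc : ℝ) * ((n:ℝ) - k) ^ k = ((Tyc * (n - k) ^ k : ℕ) : ℝ) := by
              push_cast [Nat.cast_sub hk.le]; ring
          _ ≤ ((T.card * ∏ i : Fin k, t (y i) : ℕ) : ℝ) := by exact_mod_cast h1
          _ = (T.card : ℝ) * ∏ i : Fin k, (t (y i) : ℝ) := by push_cast; ring
      rw [Finset.prod_div_distrib, Finset.prod_const, Finset.card_univ, Fintype.card_fin,
        hc, div_pow, div_le_div_iff₀ (by positivity) (by positivity),
        div_mul_eq_mul_div, div_le_iff₀ hTpos]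
      calc (Tyc:ℝ) * ((n:ℝ)-(k:ℝ))^k ≤ (T.card : ℝ) * ∏ i : Fin k, (t (y i) : ℝ) := hkey
        _ = (n:ℝ)^k * ((∏ i : Fin k, (t (y i) : ℝ)) / (n:ℝ)^k) * (T.card : ℝ) := by
            rw [mul_comm ((n:ℝ)^k), div_mul_cancel₀ _ (by positivity : ((n:ℝ)^k) ≠ 0)]
            ring
    · exact le_trans zero_le_one hc1
  have hlogc : Real.log c = -(k : ℝ) * Real.log (1 - (k : ℝ) / n) := by
    have h1 : (1 : ℝ) - (k:ℝ)/n = ((n:ℝ) - k)/n := by field_simp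
    rw [hc, Real.log_pow, h1]
    have h2 : (n:ℝ) / ((n:ℝ) - k) = (((n:ℝ) - k)/n)⁻¹ := by rw [inv_div]
    rw [h2, Real.log_inv]
    ring
  rw [← hlogc]
  have hS0 : 0 ≤ Finset.univ.sup' Finset.univ_nonempty F :=
    le_trans (hF0 (Classical.arbitrary _)) (Finset.le_sup' F (Finset.mem_univ _))
  rcases eq_or_lt_of_le hS0 with h | h
  · rw [← h, Real.log_zero]
    exact Real.log_nonneg hc1
  · exact Real.log_le_log h hsup
end
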